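/- Let λ be a partition with c ≥ λ₁ ≥ ⋯ ≥ λ_d ≥ 0, E a vector space with basis e₁,…,e_N (N = c + d), L the standard flag L_k = span(e₁,…,e_k). For a c × d matrix A, let M_A be the N × d matrix obtained by interleaving the rows of A with the rows of the identity matrix I_d according to the lattice path of λ (the i-th row of I_d is inserted so that exactly c + i - λᵢ rows of M_A precede and include it), and let P = Im(M_A) ∈ G_d(E). Then for each 1 ≤ i ≤ d, the condition dim(P + L_{c+i-λᵢ}) ≤ N - λᵢ holds if and only if the submatrix of A formed by the first i columns and the last λᵢ rows is zero. -/

import Mathlib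

/-- Number of identity rows inserted at or before (1-indexed) row `r` of `M_A`. -/
def numIns (c d : ℕ) (lam : ℕ → ℕ) (r : ℕ) : ℕ :=
  ((Finset.Icc 1 d).filter (fun i => c + i - lam i ≤ r)).card

/-- The interleaved matrix `M_A` (1-indexed entries): the `i`-th row of the
identity matrix `I_d` is placed as row `c + i - λᵢ`, and the rows of `A` fill
the remaining positions, in order. -/
def interleaved (c d : ℕ) (lam : ℕ → ℕ) (A : ℕ → ℕ → ℂ) (r j : ℕ) : ℂ :=
  if r ∈ (Finset.Icc 1 d).image (fun i => c + i - lam i) then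
    (if r = c + j - lam j then 1 else 0)
  else A (r - numIns c d lam r) j

/-- The column span `P = Im M_A ⊆ ℂ^N` (columns indexed by `1 ≤ j ≤ d`). -/
noncomputable def colSpan (N c d : ℕ) (lam : ℕ → ℕ) (A : ℕ → ℕ → ℂ) : Submodule ℂ (Fin N → ℂ) :=
  Submodule.span ℂ
    ((fun j => fun r : Fin N => interleaved c d lam A ((r : ℕ) + 1) j) ''
      {j | 1 ≤ j ∧ j ≤ d})

/-- The standard flag `L_k = span(e₁, …, e_k)` of `ℂ^N`. -/
noncomputable def stdFlag (N k : ℕ) : Submodule ℂ (Fin N → ℂ) :=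
  Submodule.span ℂ ((fun r : Fin N => (Pi.single r 1 : Fin N → ℂ)) '' {r | (r : ℕ) + 1 ≤ k})

section Aux
variable {c d : ℕ} {lam : ℕ → ℕ}
variable (hanti : ∀ i j, 1 ≤ i → i ≤ j → j ≤ d → lam j ≤ lam i)
variable (hle : ∀ i, 1 ≤ i → i ≤ d → lam i ≤ c)

include hanti hle in
lemma pos_lt_pos {j j' : ℕ} (h1 : 1 ≤ j) (h2 : j < j') (h3 : j' ≤ d) :
    c + j - lam j < c + j' - lam j' := by
  have h4 := hanti j j' h1 (le_of_lt h2) h3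
  have h5 := hle j h1 (le_trans (le_of_lt h2) h3)
  omega

include hanti hle in
lemma pos_le_iff {i j' : ℕ} (hi1 : 1 ≤ i) (hid : i ≤ d) (h1 : 1 ≤ j') (h2 : j' ≤ d) :
    c + j' - lam j' ≤ c + i - lam i ↔ j' ≤ i := by
  constructor
  · intro h
    by_contra hc
    exact absurd h (not_le.mpr (pos_lt_pos hanti hle hi1 (not_le.mp hc) h2))
  · intro h
    have h4 := hanti j' i h1 h hid
    have h5 := hle j' h1 h2
    have h6 := hle i hi1 hid
    omega

include hanti hle in
lemma pos_injOn : Set.InjOn (fun j => c + j - lam j) (Finset.Icc 1 d : Finset ℕ) := by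
  intro a ha b hb hab
  simp only [Finset.coe_Icc, Set.mem_Icc] at ha hb
  by_contra hne
  rcases lt_or_gt_of_ne hne with h | h
  · exact absurd hab (Nat.ne_of_lt (pos_lt_pos hanti hle ha.1 h hb.2))
  · exact absurd hab.symm (Nat.ne_of_lt (pos_lt_pos hanti hle hb.1 h ha.2))

include hanti hle in
/-- Counting lemma: a non-identity position `q` with `k < q ≤ N` corresponds to
an `A`-row index in `(c - lam i, c]`. -/
lemma rowIdx_bounds {i q : ℕ} (hi1 : 1 ≤ i) (hid : i ≤ d)
    (hq1 : c + i - lam i < q) (hq2 : q ≤ c + d)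
    (hqnot : ∀ j', 1 ≤ j' → j' ≤ d → c + j' - lam j' ≠ q) :
    c - lam i < q - numIns c d lam q ∧ q - numIns c d lam q ≤ c := by
  set k := c + i - lam i with hk
  have hlami := hle i hi1 hid
  set F := (Finset.Icc 1 d).filter (fun j' => c + j' - lam j' ≤ q) with hF
  have hnum : numIns c d lam q = F.card := rfl
  have hsplit : (F.filter (fun j' => j' ≤ i)).card + (F.filter (fun j' => ¬ j' ≤ i)).card
      = F.card := Finset.card_filter_add_card_filter_not _
  have hub1 : (F.filter (fun j' => j' ≤ i)).card ≤ i := by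
    have : F.filter (fun j' => j' ≤ i) ⊆ Finset.Icc 1 i := by
      intro x hx
      simp only [hF, Finset.mem_filter, Finset.mem_Icc] at hx ⊢
      exact ⟨hx.1.1.1, hx.2⟩
    simpa using Finset.card_le_card this
  have hub2 : (F.filter (fun j' => ¬ j' ≤ i)).card ≤ q - 1 - k := by
    have hcard := Finset.card_le_card_of_injOn (fun j' => c + j' - lam j')
      (s := F.filter (fun j' => ¬ j' ≤ i)) (t := Finset.Icc (k + 1) (q - 1))
      (fun a ha => by
        simp only [hF, Finset.mem_coe, Finset.mem_filter, Finset.mem_Icc] at ha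
        obtain ⟨⟨⟨ha1, ha2⟩, ha3⟩, ha4⟩ := ha
        have hgt : k < c + a - lam a := pos_lt_pos hanti hle hi1 (not_le.mp ha4) ha2
        have hne := hqnot a ha1 ha2
        simp only [Finset.mem_coe, Finset.mem_Icc]
        omega)
      (by
        intro a ha b hb hab
        have ha' : a ∈ (Finset.Icc 1 d : Finset ℕ) :=
          (Finset.mem_filter.mp (Finset.mem_filter.mp (Finset.mem_coe.mp ha)).1).1
        have hb' : b ∈ (Finset.Icc 1 d : Finset ℕ) :=
          (Finset.mem_filter.mp (Finset.mem_filter.mp (Finset.mem_coe.mp hb)).1).1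
        exact pos_injOn hanti hle (Finset.mem_coe.mpr ha') (Finset.mem_coe.mpr hb') hab)
    simpa using hcard
  have hlb : d - (c + d - q) ≤ F.card := by
    have hcompl : (F.card) + ((Finset.Icc 1 d).filter (fun j' => ¬ (c + j' - lam j' ≤ q))).card
        = d := by
      rw [hF, Finset.card_filter_add_card_filter_not]
      simp
    have hG : ((Finset.Icc 1 d).filter (fun j' => ¬ (c + j' - lam j' ≤ q))).card
        ≤ c + d - q := by
      have hcard := Finset.card_le_card_of_injOn (fun j' => c + j' - lam j')
        (s := (Finset.Icc 1 d).filter (fun j' => ¬ (c + j' - lam j' ≤ q)))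
        (t := Finset.Icc (q + 1) (c + d))
        (fun a ha => by
          simp only [Finset.mem_coe, Finset.mem_filter, Finset.mem_Icc] at ha
          obtain ⟨⟨ha1, ha2⟩, ha3⟩ := ha
          simp only [Finset.mem_coe, Finset.mem_Icc]
          omega)
        (by
          intro a ha b hb hab
          have ha' : a ∈ (Finset.Icc 1 d : Finset ℕ) :=
            (Finset.mem_filter.mp (Finset.mem_coe.mp ha)).1
          have hb' : b ∈ (Finset.Icc 1 d : Finset ℕ) :=
            (Finset.mem_filter.mp (Finset.mem_coe.mp hb)).1
          exact pos_injOn hanti hle (Finset.mem_coe.mpr ha') (Finset.mem_coe.mpr hb') hab)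
      simpa using hcard
    omega
  rw [hnum]
  omega

include hanti hle in
/-- Existence of the (1-indexed) position `p` of the `A`-row `r` in `M_A`. -/
lemma p_spec {i r : ℕ} (hi1 : 1 ≤ i) (hid : i ≤ d) (hr1 : c - lam i < r) (hr2 : r ≤ c) :
    ∃ p : ℕ, c + i - lam i < p ∧ p ≤ c + d ∧
      (∀ j', 1 ≤ j' → j' ≤ d → c + j' - lam j' ≠ p) ∧
      p - numIns c d lam p = r := by
  set f := ((Finset.Icc 1 d).filter (fun j' => c - lam j' < r)).card with hf
  set p := r + f with hp
  have ha : ∀ j', 1 ≤ j' → j' ≤ d → c - lam j' < r → c + j' - lam j' < p := by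
    intro j' h1 h2 h3
    have hsub : Finset.Icc 1 j' ⊆ (Finset.Icc 1 d).filter (fun j'' => c - lam j'' < r) := by
      intro j'' hj''
      rw [Finset.mem_Icc] at hj''
      rw [Finset.mem_filter, Finset.mem_Icc]
      have := hanti j'' j' hj''.1 hj''.2 h2
      exact ⟨⟨hj''.1, le_trans hj''.2 h2⟩, by omega⟩
    have hcard := Finset.card_le_card hsub
    rw [Nat.card_Icc] at hcard
    have := hle j' h1 h2
    omega
  have hb : ∀ j', 1 ≤ j' → j' ≤ d → r ≤ c - lam j' → p < c + j' - lam j' := by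
    intro j' h1 h2 h3
    have hsub : (Finset.Icc 1 d).filter (fun j'' => c - lam j'' < r) ⊆
        Finset.Icc 1 (j' - 1) := by
      intro j'' hj''
      rw [Finset.mem_filter, Finset.mem_Icc] at hj''
      rw [Finset.mem_Icc]
      refine ⟨hj''.1.1, ?_⟩
      by_contra hc
      have hj'le : j' ≤ j'' := by omega
      have := hanti j' j'' h1 hj'le hj''.1.2
      omega
    have hcard := Finset.card_le_card hsub
    rw [Nat.card_Icc] at hcard
    have := hle j' h1 h2
    omega
  have hnot : ∀ j', 1 ≤ j' → j' ≤ d → c + j' - lam j' ≠ p := by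
    intro j' h1 h2
    rcases lt_or_ge (c - lam j') r with h | h
    · exact Nat.ne_of_lt (ha j' h1 h2 h)
    · exact Nat.ne_of_gt (hb j' h1 h2 h)
  have hnum : numIns c d lam p = f := by
    unfold numIns
    congr 1
    ext j'
    simp only [Finset.mem_filter, Finset.mem_Icc]
    constructor
    · rintro ⟨⟨h1, h2⟩, h3⟩
      refine ⟨⟨h1, h2⟩, ?_⟩
      by_contra hc
      exact absurd h3 (not_le.mpr (hb j' h1 h2 (by omega)))
    · rintro ⟨⟨h1, h2⟩, h3⟩
      exact ⟨⟨h1, h2⟩, le_of_lt (ha j' h1 h2 h3)⟩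
  have hfi : i ≤ f := by
    have hsub : Finset.Icc 1 i ⊆ (Finset.Icc 1 d).filter (fun j'' => c - lam j'' < r) := by
      intro j'' hj''
      rw [Finset.mem_Icc] at hj''
      rw [Finset.mem_filter, Finset.mem_Icc]
      have := hanti j'' i hj''.1 hj''.2 hid
      exact ⟨⟨hj''.1, le_trans hj''.2 hid⟩, by omega⟩
    have hcard := Finset.card_le_card hsub
    rw [Nat.card_Icc] at hcard
    omega
  have hfd : f ≤ d := by
    have := Finset.card_filter_le (Finset.Icc 1 d) (fun j'' => c - lam j'' < r)
    rw [Nat.card_Icc] at this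
    omega
  have hlami := hle i hi1 hid
  exact ⟨p, by omega, by omega, hnot, by omega⟩

end Aux

lemma interleaved_id (c d : ℕ) (lam : ℕ → ℕ) (A : ℕ → ℕ → ℂ) {q j' : ℕ}
    (h1 : 1 ≤ j') (h2 : j' ≤ d) (hq : c + j' - lam j' = q) (j : ℕ) :
    interleaved c d lam A q j = if q = c + j - lam j then 1 else 0 := by
  unfold interleaved
  rw [if_pos (Finset.mem_image.mpr ⟨j', Finset.mem_Icc.mpr ⟨h1, h2⟩, hq⟩)]

lemma interleaved_notid (c d : ℕ) (lam : ℕ → ℕ) (A : ℕ → ℕ → ℂ) {q : ℕ}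
    (h : ∀ j', 1 ≤ j' → j' ≤ d → c + j' - lam j' ≠ q) (j : ℕ) :
    interleaved c d lam A q j = A (q - numIns c d lam q) j := by
  unfold interleaved
  rw [if_neg]
  intro hmem
  obtain ⟨j', hj', hval⟩ := Finset.mem_image.mp hmem
  rw [Finset.mem_Icc] at hj'
  exact h j' hj'.1 hj'.2 hval

lemma mem_stdFlag {N k : ℕ} (v : Fin N → ℂ) (hv : ∀ s : Fin N, k ≤ (s : ℕ) → v s = 0) :
    v ∈ stdFlag N k := by
  classical
  have hrep : v = ∑ s : Fin N, v s • (Pi.single s 1 : Fin N → ℂ) := by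
    funext t
    rw [Finset.sum_apply]
    simp [Pi.single_apply]
  rw [hrep]
  apply Submodule.sum_mem
  intro s _
  by_cases hs : (s : ℕ) + 1 ≤ k
  · exact Submodule.smul_mem _ _ (Submodule.subset_span ⟨s, hs, rfl⟩)
  · rw [hv s (by omega), zero_smul]
    exact Submodule.zero_mem _

lemma finrank_stdFlag_le (N k : ℕ) : Module.finrank ℂ (stdFlag N k) ≤ k := by
  classical
  have hset : ((fun r : Fin N => (Pi.single r 1 : Fin N → ℂ)) '' {r | (r : ℕ) + 1 ≤ k})
      = ↑((Finset.univ.filter (fun r : Fin N => (r : ℕ) + 1 ≤ k)).image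
          (fun r => (Pi.single r 1 : Fin N → ℂ))) := by
    rw [Finset.coe_image]
    ext r
    simp
  rw [stdFlag, hset]
  refine le_trans (finrank_span_finset_le_card _) (le_trans Finset.card_image_le ?_)
  have := Finset.card_le_card_of_injOn (fun r : Fin N => (r : ℕ) + 1)
    (s := Finset.univ.filter fun r : Fin N => (r : ℕ) + 1 ≤ k) (t := Finset.Icc 1 k)
    (fun a ha => by
      simp only [Finset.mem_coe, Finset.mem_filter] at ha
      simp only [Finset.mem_coe, Finset.mem_Icc]
      omega)
    (fun a _ b _ hab => by
      apply Fin.val_injective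
      simpa using hab)
  simpa using this

lemma finrank_span_image_le {N : ℕ} (f : ℕ → (Fin N → ℂ)) (s : Finset ℕ) :
    Module.finrank ℂ (Submodule.span ℂ (f '' ↑s)) ≤ s.card := by
  classical
  rw [← Finset.coe_image]
  exact le_trans (finrank_span_finset_le_card _) Finset.card_image_le

/-- Lemma 1: for `P = Im M_A` and `1 ≤ i ≤ d`, the condition
`dim(P + L_{c+i-λᵢ}) ≤ N - λᵢ` holds iff the submatrix of `A` formed by the
first `i` columns and the last `λᵢ` rows vanishes. -/
theorem stmt_14 (N c d : ℕ) (hN : N = c + d)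
    (lam : ℕ → ℕ) (hlam_anti : ∀ i j, 1 ≤ i → i ≤ j → j ≤ d → lam j ≤ lam i)
    (hlam_le : ∀ i, 1 ≤ i → i ≤ d → lam i ≤ c)
    (A : ℕ → ℕ → ℂ) (i : ℕ) (hi1 : 1 ≤ i) (hid : i ≤ d) :
    Module.finrank ℂ ↥(colSpan N c d lam A ⊔ stdFlag N (c + i - lam i)) ≤ N - lam i ↔
      (∀ j r, 1 ≤ j → j ≤ i → c - lam i < r → r ≤ c → A r j = 0) := by
  classical
  have hlami := hlam_le i hi1 hid
  have hNpos : 0 < c + d := by omega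
  subst hN
  set k := c + i - lam i with hk
  set colv : ℕ → (Fin (c + d) → ℂ) :=
    (fun j => fun s : Fin (c + d) => interleaved c d lam A ((s : ℕ) + 1) j) with hcolv
  have hcolSpan : colSpan (c + d) c d lam A
      = Submodule.span ℂ (colv '' {j | 1 ≤ j ∧ j ≤ d}) := rfl
  set spanGT := Submodule.span ℂ (colv '' {j | i + 1 ≤ j ∧ j ≤ d}) with hspanGT
  have hGTset : colv '' {j | i + 1 ≤ j ∧ j ≤ d} = colv '' ↑(Finset.Icc (i + 1) d) := by
    have : {j | i + 1 ≤ j ∧ j ≤ d} = (↑(Finset.Icc (i + 1) d) : Set ℕ) := by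
      ext jj
      simp [Finset.mem_Icc]
    rw [this]
  have hGTrank : Module.finrank ℂ spanGT ≤ d - i := by
    rw [hspanGT, hGTset]
    refine le_trans (finrank_span_image_le _ _) ?_
    rw [Nat.card_Icc]
    omega
  have hstdrank := finrank_stdFlag_le (c + d) k
  have hposgt : ∀ j', i < j' → j' ≤ d → k < c + j' - lam j' :=
    fun j' h1 h2 => pos_lt_pos hlam_anti hlam_le hi1 h1 h2
  have hposle : ∀ j', 1 ≤ j' → j' ≤ i → c + j' - lam j' ≤ k :=
    fun j' h1 h2 =>
      (pos_le_iff hlam_anti hlam_le hi1 hid h1 (le_trans h2 hid)).mpr h2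
  constructor
  · -- forward direction
    intro hdim j r hj1 hji hr1 hr2
    obtain ⟨p, hpk, hpN, hpnot, hpr⟩ := p_spec hlam_anti hlam_le hi1 hid hr1 hr2
    set W₀ := stdFlag (c + d) k ⊔ spanGT with hW₀
    set idS : Finset ℕ := (Finset.Icc (i + 1) d).image (fun j' => c + j' - lam j') with hidS
    set S : Finset (Fin (c + d)) :=
      Finset.univ.filter (fun s => (s : ℕ) + 1 ≤ k ∨ (s : ℕ) + 1 ∈ idS) with hS
    have hSmem : ∀ u : Fin (c + d), u ∈ S ↔ ((u : ℕ) + 1 ≤ k ∨ (u : ℕ) + 1 ∈ idS) := by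
      intro u
      rw [hS, Finset.mem_filter]
      simp
    have hidS_card : idS.card = d - i := by
      rw [hidS, Finset.card_image_of_injOn (Set.InjOn.mono
        (by
          intro x hx
          simp only [Finset.coe_Icc, Set.mem_Icc] at hx
          simp only [Finset.coe_Icc, Set.mem_Icc]
          omega)
        (pos_injOn hlam_anti hlam_le)), Nat.card_Icc]
      omega
    have hidS_mem : ∀ q ∈ idS, k < q ∧ q ≤ c + d ∧ 1 ≤ q := by
      intro q hq
      obtain ⟨j', hj', rfl⟩ := Finset.mem_image.mp hq
      rw [Finset.mem_Icc] at hj'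
      have h1 := hposgt j' (by omega) hj'.2
      have h2 := hlam_le j' (by omega) hj'.2
      omega
    have hScard : S.card = c + d - lam i := by
      have hbij : S.card = (Finset.Icc 1 k ∪ idS).card := by
        refine Finset.card_bij (fun (s : Fin (c + d)) (_ : s ∈ S) => (s : ℕ) + 1) ?_ ?_ ?_
        · intro a ha
          rw [hS, Finset.mem_filter] at ha
          rcases ha.2 with h | h
          · exact Finset.mem_union_left _ (Finset.mem_Icc.mpr ⟨Nat.succ_le_succ (Nat.zero_le _), h⟩)
          · exact Finset.mem_union_right _ h
        · intro a _ b _ hab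
          exact Fin.val_injective (by simpa using hab)
        · intro b hb
          have hbb : 1 ≤ b ∧ b ≤ c + d := by
            rcases Finset.mem_union.mp hb with h | h
            · rw [Finset.mem_Icc] at h
              omega
            · have := hidS_mem b h
              omega
          refine ⟨⟨b - 1, by omega⟩, ?_, by simp; omega⟩
          rw [hS, Finset.mem_filter]
          refine ⟨Finset.mem_univ _, ?_⟩
          have hval : ((⟨b - 1, by omega⟩ : Fin (c + d)) : ℕ) + 1 = b := by
            simp
            omega
          rw [hval]
          rcases Finset.mem_union.mp hb with h | h
          · left; exact (Finset.mem_Icc.mp h).2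
          · right; exact h
      rw [hbij, Finset.card_union_of_disjoint, Nat.card_Icc, hidS_card]
      · omega
      · rw [Finset.disjoint_left]
        intro a ha hb
        rw [Finset.mem_Icc] at ha
        have := hidS_mem a hb
        omega
    set π : (Fin (c + d) → ℂ) →ₗ[ℂ] ({x // x ∈ S} → ℂ) :=
      LinearMap.funLeft ℂ ℂ (Subtype.val) with hπ
    have hsingle_mem : ∀ s : {x // x ∈ S},
        (Pi.single s 1 : {x // x ∈ S} → ℂ) ∈ Submodule.map π W₀ := by
      intro s
      rcases (hSmem s.1).mp s.2 with hcase | hcase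
      · refine Submodule.mem_map.mpr ⟨Pi.single (s : Fin (c + d)) 1,
          Submodule.mem_sup_left (Submodule.subset_span ⟨(s : Fin (c + d)), hcase, rfl⟩), ?_⟩
        funext t
        rw [hπ]
        rw [LinearMap.funLeft_apply]
        simp only [Pi.single_apply, Subtype.ext_iff]
      · obtain ⟨j', hj'mem, hj'pos⟩ := Finset.mem_image.mp hcase
        rw [Finset.mem_Icc] at hj'mem
        set trunc : Fin (c + d) → ℂ :=
          ∑ t ∈ Finset.univ.filter (fun t : Fin (c + d) => (t : ℕ) + 1 ≤ k),
            colv j' t • (Pi.single t 1 : Fin (c + d) → ℂ) with htr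
        have htrunc : ∀ u : Fin (c + d),
            trunc u = if (u : ℕ) + 1 ≤ k then colv j' u else 0 := by
          intro u
          rw [htr, Finset.sum_apply]
          simp only [Pi.smul_apply, Pi.single_apply, smul_eq_mul, mul_ite, mul_one, mul_zero]
          rw [Finset.sum_ite_eq]
          simp
        have hxmem : colv j' - trunc ∈ W₀ := by
          apply Submodule.sub_mem
          · exact Submodule.mem_sup_right
              (Submodule.subset_span ⟨j', ⟨hj'mem.1, hj'mem.2⟩, rfl⟩)
          · refine Submodule.mem_sup_left (Submodule.sum_mem _ ?_)
            intro t ht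
            exact Submodule.smul_mem _ _
              (Submodule.subset_span ⟨t, (Finset.mem_filter.mp ht).2, rfl⟩)
        refine Submodule.mem_map.mpr ⟨colv j' - trunc, hxmem, ?_⟩
        have hsk : k < ((s : Fin (c + d)) : ℕ) + 1 := by
          have := hposgt j' (by omega) hj'mem.2
          omega
        funext t
        rw [hπ]
        simp only [LinearMap.funLeft_apply, Pi.sub_apply]
        rw [htrunc]
        by_cases hc : ((t : Fin (c + d)) : ℕ) + 1 ≤ k
        · rw [if_pos hc, sub_self, Pi.single_apply, if_neg]
          intro hts
          rw [hts] at hc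
          omega
        · rw [if_neg hc, sub_zero]
          rcases (hSmem t.1).mp t.2 with h | h
          · exact absurd h hc
          obtain ⟨j'', hj''mem, hj''pos⟩ := Finset.mem_image.mp h
          rw [Finset.mem_Icc] at hj''mem
          show interleaved c d lam A (((t : Fin (c + d)) : ℕ) + 1) j' = _
          rw [interleaved_id c d lam A (by omega) hj''mem.2 hj''pos j']
          have hiff : ((((t : Fin (c + d)) : ℕ) + 1 = c + j' - lam j')) ↔ t = s := by
            constructor
            · intro hh
              refine Subtype.ext (Fin.val_injective ?_)
              omega
            · intro hh
              rw [hh]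
              omega
          rw [if_congr hiff rfl rfl, Pi.single_apply]
    have hmap : Submodule.map π W₀ = ⊤ := by
      rw [eq_top_iff, ← (Pi.basisFun ℂ {x // x ∈ S}).span_eq, Submodule.span_le]
      rintro _ ⟨s, rfl⟩
      rw [Pi.basisFun_apply]
      exact hsingle_mem s
    have hrank0 : c + d - lam i ≤ Module.finrank ℂ W₀ := by
      have h1 := Submodule.finrank_map_le π W₀
      rw [hmap, finrank_top, Module.finrank_fintype_fun_eq_card, Fintype.card_coe,
        hScard] at h1
      exact h1
    have hW₀W : W₀ ≤ colSpan (c + d) c d lam A ⊔ stdFlag (c + d) k := by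
      apply sup_le le_sup_right
      refine le_trans ?_ le_sup_left
      rw [hcolSpan]
      exact Submodule.span_mono
        (Set.image_mono (fun x hx => ⟨le_trans (by omega) hx.1, hx.2⟩))
    have heq : W₀ = colSpan (c + d) c d lam A ⊔ stdFlag (c + d) k :=
      Submodule.eq_of_le_of_finrank_le hW₀W (le_trans hdim hrank0)
    have hcolmem : colv j ∈ W₀ := by
      rw [heq]
      exact Submodule.mem_sup_left
        (Submodule.subset_span ⟨j, ⟨hj1, le_trans hji hid⟩, rfl⟩)
    set pF : Fin (c + d) := ⟨p - 1, by omega⟩ with hpF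
    set posF : ℕ → Fin (c + d) :=
      fun j' => ⟨min (c + j' - lam j') (c + d) - 1, by omega⟩ with hposF
    have hposFval : ∀ j', 1 ≤ j' → j' ≤ d → ((posF j') : ℕ) + 1 = c + j' - lam j' := by
      intro j' h1 h2
      have := hlam_le j' h1 h2
      simp only [hposF]
      omega
    obtain ⟨φ, hφ⟩ : ∃ φ : (Fin (c + d) → ℂ) →ₗ[ℂ] ℂ, φ =
        LinearMap.proj pF - ∑ j' ∈ Finset.Icc (i + 1) d, A r j' • LinearMap.proj (posF j') :=
      ⟨_, rfl⟩
    have happly : ∀ v : Fin (c + d) → ℂ,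
        φ v = v pF - ∑ j' ∈ Finset.Icc (i + 1) d, A r j' * v (posF j') := by
      intro v
      rw [hφ]
      simp [LinearMap.sub_apply, LinearMap.sum_apply, LinearMap.smul_apply,
        LinearMap.proj_apply, smul_eq_mul]
    have hcol_at_p : ∀ jj, colv jj pF = A r jj := by
      intro jj
      show interleaved c d lam A ((p - 1) + 1) jj = A r jj
      rw [show p - 1 + 1 = p by omega, interleaved_notid c d lam A hpnot jj, hpr]
    have hcol_at_pos : ∀ jj j', 1 ≤ j' → j' ≤ d →
        colv jj (posF j') = if c + j' - lam j' = c + jj - lam jj then 1 else 0 := by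
      intro jj j' h3 h4
      show interleaved c d lam A (((posF j') : ℕ) + 1) jj = _
      rw [hposFval j' h3 h4, interleaved_id c d lam A h3 h4 rfl jj]
    have hker : W₀ ≤ LinearMap.ker φ := by
      apply sup_le
      · rw [stdFlag, Submodule.span_le]
        rintro _ ⟨t, ht, rfl⟩
        have ht' : (t : ℕ) + 1 ≤ k := ht
        rw [SetLike.mem_coe, LinearMap.mem_ker]
        beta_reduce
        rw [happly]
        have h1 : (Pi.single t 1 : Fin (c + d) → ℂ) pF = 0 := by
          rw [Pi.single_apply, if_neg]
          intro hc
          have hval : (pF : ℕ) = (t : ℕ) := by rw [hc]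
          simp only [hpF] at hval
          omega
        have h2 : ∀ j' ∈ Finset.Icc (i + 1) d,
            A r j' * (Pi.single t 1 : Fin (c + d) → ℂ) (posF j') = 0 := by
          intro j' hj'
          rw [Finset.mem_Icc] at hj'
          rw [Pi.single_apply, if_neg, mul_zero]
          intro hc
          have hval : ((posF j') : ℕ) = (t : ℕ) := by rw [hc]
          have := hposFval j' (by omega) hj'.2
          have := hposgt j' (by omega) hj'.2
          omega
        rw [h1, Finset.sum_eq_zero h2, sub_zero]
      · rw [hspanGT, Submodule.span_le]
        rintro _ ⟨jj, ⟨h1, h2⟩, rfl⟩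
        rw [SetLike.mem_coe, LinearMap.mem_ker, happly, hcol_at_p]
        have hterm : ∀ j' ∈ Finset.Icc (i + 1) d,
            A r j' * colv jj (posF j') = if j' = jj then A r j' else 0 := by
          intro j' hj'
          rw [Finset.mem_Icc] at hj'
          rw [hcol_at_pos jj j' (by omega) hj'.2]
          by_cases hc : j' = jj
          · rw [hc, if_pos rfl, if_pos rfl, mul_one]
          · rw [if_neg, if_neg hc, mul_zero]
            intro hcc
            exact hc (pos_injOn hlam_anti hlam_le
              (Finset.mem_coe.mpr (Finset.mem_Icc.mpr ⟨by omega, hj'.2⟩))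
              (Finset.mem_coe.mpr (Finset.mem_Icc.mpr ⟨by omega, h2⟩)) hcc)
        rw [Finset.sum_congr rfl hterm,
          Finset.sum_ite_eq' (Finset.Icc (i + 1) d) jj (fun j' => A r j'),
          if_pos (Finset.mem_Icc.mpr ⟨h1, h2⟩), sub_self]
    have h0 : φ (colv j) = 0 := LinearMap.mem_ker.mp (hker hcolmem)
    rw [happly, hcol_at_p] at h0
    have hzero : ∀ j' ∈ Finset.Icc (i + 1) d, A r j' * colv j (posF j') = 0 := by
      intro j' hj'
      rw [Finset.mem_Icc] at hj'
      rw [hcol_at_pos j j' (by omega) hj'.2, if_neg, mul_zero]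
      have ha := hposle j hj1 hji
      have hb := hposgt j' (by omega) hj'.2
      omega
    rw [Finset.sum_eq_zero hzero, sub_zero] at h0
    exact h0
  · -- backward direction
    intro hA
    have hvan : ∀ j, 1 ≤ j → j ≤ i → ∀ s : Fin (c + d), k ≤ (s : ℕ) → colv j s = 0 := by
      intro j hj1 hji s hs
      by_cases hq : ∃ j', 1 ≤ j' ∧ j' ≤ d ∧ c + j' - lam j' = (s : ℕ) + 1
      · obtain ⟨j', h1, h2, h3⟩ := hq
        show interleaved c d lam A ((s : ℕ) + 1) j = 0
        rw [interleaved_id c d lam A h1 h2 h3 j, if_neg]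
        have := hposle j hj1 hji
        omega
      · push_neg at hq
        show interleaved c d lam A ((s : ℕ) + 1) j = 0
        rw [interleaved_notid c d lam A (fun j' ha hb => hq j' ha hb) j]
        have hb := rowIdx_bounds hlam_anti hlam_le hi1 hid (by omega)
          (by have := s.isLt; omega) (fun j' ha hb => hq j' ha hb)
        exact hA j _ hj1 hji hb.1 hb.2
    have hle2 : colSpan (c + d) c d lam A ⊔ stdFlag (c + d) k
        ≤ stdFlag (c + d) k ⊔ spanGT := by
      apply sup_le _ le_sup_left
      rw [hcolSpan, Submodule.span_le]
      rintro _ ⟨jj, ⟨h1, h2⟩, rfl⟩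
      by_cases hcase : jj ≤ i
      · exact Submodule.mem_sup_left (mem_stdFlag _ (hvan jj h1 hcase))
      · exact Submodule.mem_sup_right (Submodule.subset_span ⟨jj, ⟨by omega, h2⟩, rfl⟩)
    refine le_trans (Submodule.finrank_mono hle2) ?_
    refine le_trans (Submodule.finrank_add_le_finrank_add_finrank _ _) ?_
    exact le_trans (add_le_add hstdrank hGTrank) (by omega)
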